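/- Let k > 0 and h_t the one-dimensional Dunkl heat kernel. There exist positive constants c, C such that for every t > 0 and x, y ∈ ℝ with xy ≥ t, c · t^{-1/2} (xy)^{-k} e^{-(x−y)²/(4t)} ≤ h_t(x,y) ≤ C · t^{-1/2} (xy)^{-k} e^{-(x−y)²/(4t)}. -/

import Mathlib

open Real MeasureTheory intervalIntegral

open Set


lemma base_int (k : ℝ) (hk : 0 < k) {a b : ℝ} (ha : -1 ≤ a) (ha' : a ≤ 1) (hb : -1 ≤ b)
    (hb' : b ≤ 1) : IntervalIntegrable (fun u : ℝ => (1 - u) ^ (k - 1)) volume a b := by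
  have h0 : IntervalIntegrable (fun v : ℝ => v ^ (k - 1)) volume 2 0 :=
    (intervalIntegrable_rpow' (by linarith)).symm
  have := h0.comp_sub_left 1
  exact this.mono_set (by
    rw [Set.uIcc_of_le (by norm_num : (1:ℝ) - 2 ≤ 1 - 0)]
    exact Set.uIcc_subset_Icc ⟨by linarith, by linarith⟩ ⟨by linarith, by linarith⟩)

lemma cont_aux (k l : ℝ) (hk : 0 < k) :
    Continuous (fun u : ℝ => (1 + u) ^ k * Real.exp (l * u)) := by
  apply Continuous.mul ?_ (by fun_prop)
  rw [continuous_iff_continuousAt]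
  intro x
  exact (Real.continuousAt_rpow_const _ _ (Or.inr hk.le)).comp (by fun_prop)

lemma f_int (k l : ℝ) (hk : 0 < k) {a b : ℝ} (ha : -1 ≤ a) (ha' : a ≤ 1) (hb : -1 ≤ b)
    (hb' : b ≤ 1) :
    IntervalIntegrable (fun u : ℝ => (1 - u) ^ (k - 1) * (1 + u) ^ k * Real.exp (l * u))
      volume a b := by
  have := (base_int k hk ha ha' hb hb').mul_continuousOn (cont_aux k l hk).continuousOn
  simpa [mul_assoc] using this

lemma I_upper (k : ℝ) (hk : 0 < k) {l : ℝ} (hl : 1/2 ≤ l) :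
    (∫ u in (-1:ℝ)..1, (1 - u) ^ (k - 1) * (1 + u) ^ k * Real.exp (l * u))
      ≤ (2:ℝ) ^ k * Real.Gamma k * l ^ (-k) * Real.exp l := by
  have hl0 : 0 < l := lt_of_lt_of_le (by norm_num) hl
  have hGint : IntegrableOn (fun v : ℝ => v ^ (k - 1) * Real.exp (-(l * v))) (Ioi 0) := by
    have := integrableOn_rpow_mul_exp_neg_mul_rpow (p := 1) (s := k - 1) (b := l)
      (by linarith) one_pos hl0
    simpa [Real.rpow_one, neg_mul] using this
  have step1 : (∫ u in (-1:ℝ)..1, (1 - u) ^ (k - 1) * (1 + u) ^ k * Real.exp (l * u))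
      ≤ ∫ u in (-1:ℝ)..1, (1 - u) ^ (k - 1) * Real.exp (-(l * (1 - u)))
          * ((2:ℝ) ^ k * Real.exp l) := by
    apply intervalIntegral.integral_mono_on (by norm_num)
      (f_int k l hk (by norm_num) (by norm_num) (by norm_num) (by norm_num))
    · exact ((base_int k hk (by norm_num) (by norm_num) (by norm_num)
        (by norm_num)).mul_continuousOn (by fun_prop)).mul_continuousOn continuousOn_const
    · intro u hu
      obtain ⟨h1, h2⟩ := hu
      have hpow : (1 + u) ^ k ≤ (2:ℝ) ^ k :=
        Real.rpow_le_rpow (by linarith) (by linarith) hk.le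
      have hexp : Real.exp (l * u) = Real.exp (-(l * (1 - u))) * Real.exp l := by
        rw [← Real.exp_add]; ring_nf
      have h0 : (0:ℝ) ≤ (1 - u) ^ (k - 1) := Real.rpow_nonneg (by linarith) _
      calc (1 - u) ^ (k - 1) * (1 + u) ^ k * Real.exp (l * u)
          ≤ (1 - u) ^ (k - 1) * (2:ℝ) ^ k * Real.exp (l * u) := by
            apply mul_le_mul_of_nonneg_right _ (Real.exp_nonneg _)
            exact mul_le_mul_of_nonneg_left hpow h0
        _ = (1 - u) ^ (k - 1) * Real.exp (-(l * (1 - u))) * ((2:ℝ) ^ k * Real.exp l) := by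
            rw [hexp]; ring
  have step2 : (∫ u in (-1:ℝ)..1, (1 - u) ^ (k - 1) * Real.exp (-(l * (1 - u)))
          * ((2:ℝ) ^ k * Real.exp l))
      = (∫ v in (0:ℝ)..2, v ^ (k - 1) * Real.exp (-(l * v))) * ((2:ℝ) ^ k * Real.exp l) := by
    rw [intervalIntegral.integral_mul_const]
    congr 1
    have := intervalIntegral.integral_comp_sub_left (a := (-1:ℝ)) (b := 1)
      (fun v : ℝ => v ^ (k - 1) * Real.exp (-(l * v))) 1
    norm_num at this ⊢
    exact this
  have step3 : (∫ v in (0:ℝ)..2, v ^ (k - 1) * Real.exp (-(l * v)))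
      ≤ l ^ (-k) * Real.Gamma k := by
    rw [intervalIntegral.integral_of_le (by norm_num)]
    have hmono : (∫ v in Set.Ioc (0:ℝ) 2, v ^ (k - 1) * Real.exp (-(l * v)))
        ≤ ∫ v in Set.Ioi (0:ℝ), v ^ (k - 1) * Real.exp (-(l * v)) := by
      apply setIntegral_mono_set hGint
      · filter_upwards [self_mem_ae_restrict measurableSet_Ioi] with v hv
        exact mul_nonneg (Real.rpow_nonneg (le_of_lt hv) _) (Real.exp_nonneg _)
      · exact HasSubset.Subset.eventuallyLE Set.Ioc_subset_Ioi_self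
    have heq : (∫ v in Set.Ioi (0:ℝ), v ^ (k - 1) * Real.exp (-(l * v)))
        = (1 / l) ^ k * Real.Gamma k := Real.integral_rpow_mul_exp_neg_mul_Ioi hk hl0
    rw [heq] at hmono
    rwa [one_div, Real.inv_rpow hl0.le, ← Real.rpow_neg hl0.le] at hmono
  calc (∫ u in (-1:ℝ)..1, (1 - u) ^ (k - 1) * (1 + u) ^ k * Real.exp (l * u))
      ≤ (∫ v in (0:ℝ)..2, v ^ (k - 1) * Real.exp (-(l * v))) * ((2:ℝ) ^ k * Real.exp l) := by
        rw [← step2]; exact step1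
    _ ≤ (l ^ (-k) * Real.Gamma k) * ((2:ℝ) ^ k * Real.exp l) := by
        apply mul_le_mul_of_nonneg_right step3 (by positivity)
    _ = (2:ℝ) ^ k * Real.Gamma k * l ^ (-k) * Real.exp l := by ring


lemma I_lower (k : ℝ) (hk : 0 < k) {l : ℝ} (hl : 1/2 ≤ l) :
    Real.exp (-2⁻¹) / k * (2:ℝ) ^ (-k) * l ^ (-k) * Real.exp l
      ≤ ∫ u in (-1:ℝ)..1, (1 - u) ^ (k - 1) * (1 + u) ^ k * Real.exp (l * u) := by
  have hl0 : 0 < l := lt_of_lt_of_le (by norm_num) hl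
  set a : ℝ := 1 - (2 * l)⁻¹ with ha_def
  have hinv : (0:ℝ) < (2 * l)⁻¹ := by positivity
  have hinv1 : (2 * l)⁻¹ ≤ 1 := by
    rw [inv_le_one_iff₀]; right; linarith
  have ha0 : 0 ≤ a := by simp only [ha_def]; linarith
  have ha1 : a ≤ 1 := by simp only [ha_def]; linarith
  -- split
  have hsplit : (∫ u in (-1:ℝ)..a, (1 - u) ^ (k - 1) * (1 + u) ^ k * Real.exp (l * u))
      + (∫ u in a..1, (1 - u) ^ (k - 1) * (1 + u) ^ k * Real.exp (l * u))
      = ∫ u in (-1:ℝ)..1, (1 - u) ^ (k - 1) * (1 + u) ^ k * Real.exp (l * u) :=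
    intervalIntegral.integral_add_adjacent_intervals
      (f_int k l hk (by norm_num) (by norm_num) (by linarith) ha1)
      (f_int k l hk (by linarith) ha1 (by norm_num) (by norm_num))
  have hleft : (0:ℝ) ≤ ∫ u in (-1:ℝ)..a, (1 - u) ^ (k - 1) * (1 + u) ^ k * Real.exp (l * u) := by
    apply intervalIntegral.integral_nonneg (by linarith)
    intro u hu
    have := hu.1; have := hu.2
    have h1 : (0:ℝ) ≤ (1 - u) ^ (k - 1) := Real.rpow_nonneg (by linarith) _
    have h2 : (0:ℝ) ≤ (1 + u) ^ k := Real.rpow_nonneg (by linarith) _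
    positivity
  -- lower bound on [a,1]
  have hla : l * a = l - 2⁻¹ := by
    simp only [ha_def]; field_simp
  have hmono : (∫ u in a..1, (1 - u) ^ (k - 1) * (Real.exp l * Real.exp (-2⁻¹)))
      ≤ ∫ u in a..1, (1 - u) ^ (k - 1) * (1 + u) ^ k * Real.exp (l * u) := by
    apply intervalIntegral.integral_mono_on ha1
      ((base_int k hk (by linarith) ha1 (by norm_num) (by norm_num)).mul_continuousOn
        continuousOn_const)
      (f_int k l hk (by linarith) ha1 (by norm_num) (by norm_num))
    intro u hu
    obtain ⟨h1, h2⟩ := hu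
    have h0 : (0:ℝ) ≤ (1 - u) ^ (k - 1) := Real.rpow_nonneg (by linarith) _
    have hpow : (1:ℝ) ≤ (1 + u) ^ k := by
      have : (1:ℝ) ^ k ≤ (1 + u) ^ k :=
        Real.rpow_le_rpow (by norm_num) (by linarith) hk.le
      simpa using this
    have hexp : Real.exp l * Real.exp (-2⁻¹) ≤ Real.exp (l * u) := by
      rw [← Real.exp_add]
      apply Real.exp_le_exp.2
      have : l - 2⁻¹ ≤ l * u := by
        rw [← hla]; exact mul_le_mul_of_nonneg_left h1 hl0.le
      linarith
    calc (1 - u) ^ (k - 1) * (Real.exp l * Real.exp (-2⁻¹))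
        ≤ (1 - u) ^ (k - 1) * Real.exp (l * u) := mul_le_mul_of_nonneg_left hexp h0
      _ = (1 - u) ^ (k - 1) * 1 * Real.exp (l * u) := by ring
      _ ≤ (1 - u) ^ (k - 1) * (1 + u) ^ k * Real.exp (l * u) := by
          apply mul_le_mul_of_nonneg_right _ (Real.exp_nonneg _)
          exact mul_le_mul_of_nonneg_left hpow h0
  -- compute the lower integral
  have hcomp : (∫ u in a..1, (1 - u) ^ (k - 1)) = ((2 * l)⁻¹) ^ k / k := by
    have := intervalIntegral.integral_comp_sub_left (a := a) (b := 1)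
      (fun v : ℝ => v ^ (k - 1)) 1
    simp only [sub_self] at this
    rw [this]
    rw [integral_rpow (Or.inl (by linarith))]
    rw [Real.zero_rpow (by linarith : k - 1 + 1 ≠ 0)]
    have h1a : 1 - a = (2 * l)⁻¹ := by simp only [ha_def]; ring
    rw [h1a]
    rw [sub_zero]
    have hkk : k - 1 + 1 = k := by ring
    rw [hkk]
  have hval : (∫ u in a..1, (1 - u) ^ (k - 1) * (Real.exp l * Real.exp (-2⁻¹)))
      = Real.exp (-2⁻¹) / k * (2:ℝ) ^ (-k) * l ^ (-k) * Real.exp l := by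
    rw [intervalIntegral.integral_mul_const, hcomp]
    rw [mul_inv, Real.mul_rpow (by positivity) (by positivity),
      Real.inv_rpow (by norm_num), Real.inv_rpow hl0.le,
      ← Real.rpow_neg (by norm_num), ← Real.rpow_neg hl0.le]
    ring
  rw [← hsplit, ← hval]
  linarith


noncomputable def dunklE (k x y : ℝ) : ℝ :=
  (Real.Gamma (k + 1/2) / (Real.Gamma k * Real.Gamma (1/2))) *
    ∫ u in (-1:ℝ)..1, (1 - u) ^ (k - 1) * (1 + u) ^ k * Real.exp (x * y * u)

/-- The one-dimensional Dunkl heat kernel. -/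
noncomputable def heatH (k t x y : ℝ) : ℝ :=
  ((2:ℝ) ^ (2 * k + 1) * Real.Gamma (k + 1/2))⁻¹ * t ^ (-k - 1/2) *
    Real.exp (-(x ^ 2 + y ^ 2) / (4 * t)) *
    dunklE k (x / Real.sqrt (2 * t)) (y / Real.sqrt (2 * t))

theorem heatH_bounds_pos_xy (k : ℝ) (hk : 0 < k) :
    ∃ c > (0:ℝ), ∃ C > (0:ℝ), ∀ t > (0:ℝ), ∀ x y : ℝ, t ≤ x * y →
      c * t ^ (-(1:ℝ)/2) * (x * y) ^ (-k) * Real.exp (-(x - y) ^ 2 / (4 * t)) ≤ heatH k t x y ∧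
      heatH k t x y ≤ C * t ^ (-(1:ℝ)/2) * (x * y) ^ (-k) * Real.exp (-(x - y) ^ 2 / (4 * t)) := by
  set A : ℝ := ((2:ℝ) ^ (2 * k + 1) * Real.Gamma (k + 1/2))⁻¹ with hA_def
  set B : ℝ := Real.Gamma (k + 1/2) / (Real.Gamma k * Real.Gamma (1/2)) with hB_def
  have hG1 : 0 < Real.Gamma (k + 1/2) := Real.Gamma_pos_of_pos (by linarith)
  have hGk : 0 < Real.Gamma k := Real.Gamma_pos_of_pos hk
  have hGh : 0 < Real.Gamma (1/2 : ℝ) := Real.Gamma_pos_of_pos (by norm_num)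
  have hA : 0 < A := by
    rw [hA_def]
    exact inv_pos.2 (mul_pos (Real.rpow_pos_of_pos (by norm_num) _) hG1)
  have hB : 0 < B := div_pos hG1 (mul_pos hGk hGh)
  set c0 : ℝ := Real.exp (-2⁻¹) / k * (2:ℝ) ^ (-k) with hc0_def
  set C0 : ℝ := (2:ℝ) ^ k * Real.Gamma k with hC0_def
  have hc0 : 0 < c0 := mul_pos (div_pos (Real.exp_pos _) hk) (Real.rpow_pos_of_pos two_pos _)
  have hC0 : 0 < C0 := mul_pos (Real.rpow_pos_of_pos two_pos _) hGk
  refine ⟨A * B * c0 * (2:ℝ) ^ k, by positivity, A * B * C0 * (2:ℝ) ^ k, by positivity, ?_⟩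
  intro t ht x y hle
  have hxy : 0 < x * y := lt_of_lt_of_le ht hle
  set l : ℝ := x * y / (2 * t) with hl_def
  have hl : 1/2 ≤ l := by
    rw [hl_def, le_div_iff₀ (by positivity)]
    linarith
  have hs : Real.sqrt (2 * t) * Real.sqrt (2 * t) = 2 * t :=
    Real.mul_self_sqrt (by positivity)
  have harg : x / Real.sqrt (2 * t) * (y / Real.sqrt (2 * t)) = l := by
    rw [div_mul_div_comm, hs, hl_def]
  have hH : heatH k t x y = A * t ^ (-k - 1/2) * Real.exp (-(x ^ 2 + y ^ 2) / (4 * t)) *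
      (B * ∫ u in (-1:ℝ)..1, (1 - u) ^ (k - 1) * (1 + u) ^ k * Real.exp (l * u)) := by
    rw [heatH, dunklE, harg]
  have hkey : t ^ (-k - 1/2) * Real.exp (-(x ^ 2 + y ^ 2) / (4 * t)) * (l ^ (-k) * Real.exp l)
      = (2:ℝ) ^ k * (t ^ (-(1:ℝ)/2) * ((x * y) ^ (-k) *
          Real.exp (-(x - y) ^ 2 / (4 * t)))) := by
    have e1 : l ^ (-k) = (x * y) ^ (-k) * ((2:ℝ) ^ k * t ^ k) := by
      rw [hl_def, Real.div_rpow hxy.le (by positivity),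
        Real.rpow_neg (by positivity : (0:ℝ) ≤ 2 * t), division_def, inv_inv,
        Real.mul_rpow (by norm_num) ht.le]
    have e2 : t ^ (-k - 1/2) * t ^ k = t ^ (-(1:ℝ)/2) := by
      rw [← Real.rpow_add ht]
      congr 1
      ring
    have e3 : Real.exp (-(x ^ 2 + y ^ 2) / (4 * t)) * Real.exp l
        = Real.exp (-(x - y) ^ 2 / (4 * t)) := by
      rw [← Real.exp_add, hl_def]
      congr 1
      field_simp
      ring
    calc t ^ (-k - 1/2) * Real.exp (-(x ^ 2 + y ^ 2) / (4 * t)) * (l ^ (-k) * Real.exp l)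
        = (t ^ (-k - 1/2) * t ^ k) *
            (Real.exp (-(x ^ 2 + y ^ 2) / (4 * t)) * Real.exp l) *
            ((x * y) ^ (-k) * (2:ℝ) ^ k) := by rw [e1]; ring
      _ = (2:ℝ) ^ k * (t ^ (-(1:ℝ)/2) * ((x * y) ^ (-k) *
            Real.exp (-(x - y) ^ 2 / (4 * t)))) := by rw [e2, e3]; ring
  have hP : 0 < A * t ^ (-k - 1/2) * Real.exp (-(x ^ 2 + y ^ 2) / (4 * t)) * B := by
    have := Real.rpow_pos_of_pos ht (-k - 1/2)
    positivity
  constructor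
  · calc A * B * c0 * (2:ℝ) ^ k * t ^ (-(1:ℝ)/2) * (x * y) ^ (-k) *
        Real.exp (-(x - y) ^ 2 / (4 * t))
        = (A * t ^ (-k - 1/2) * Real.exp (-(x ^ 2 + y ^ 2) / (4 * t)) * B) *
            (c0 * l ^ (-k) * Real.exp l) := by
          linear_combination (-(A * B * c0)) * hkey
      _ ≤ (A * t ^ (-k - 1/2) * Real.exp (-(x ^ 2 + y ^ 2) / (4 * t)) * B) *
            (∫ u in (-1:ℝ)..1, (1 - u) ^ (k - 1) * (1 + u) ^ k * Real.exp (l * u)) := by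
          apply mul_le_mul_of_nonneg_left _ hP.le
          have := I_lower k hk hl
          rw [hc0_def]
          linarith
      _ = heatH k t x y := by rw [hH]; ring
  · calc heatH k t x y
        = (A * t ^ (-k - 1/2) * Real.exp (-(x ^ 2 + y ^ 2) / (4 * t)) * B) *
            (∫ u in (-1:ℝ)..1, (1 - u) ^ (k - 1) * (1 + u) ^ k * Real.exp (l * u)) := by
          rw [hH]; ring
      _ ≤ (A * t ^ (-k - 1/2) * Real.exp (-(x ^ 2 + y ^ 2) / (4 * t)) * B) *
            (C0 * l ^ (-k) * Real.exp l) := by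
          apply mul_le_mul_of_nonneg_left _ hP.le
          have := I_upper k hk hl
          rw [hC0_def]
          linarith
      _ = A * B * C0 * (2:ℝ) ^ k * t ^ (-(1:ℝ)/2) * (x * y) ^ (-k) *
            Real.exp (-(x - y) ^ 2 / (4 * t)) := by
          linear_combination (A * B * C0) * hkey
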